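/- For integer p ≥ 2, the derivatives of the Kress map w(s) = 2π v(s)^p/(v(s)^p + v(2π−s)^p) vanish to order p − 1 at the endpoints: w^{(q)}(0) = w^{(q)}(2π) = 0 for all 1 ≤ q ≤ p − 1. -/

import Mathlib

noncomputable section

open Real

/-- The cubic polynomial in the Kress change of variable (integer parameter `p`). -/
def kressV (p : ℕ) (s : ℝ) : ℝ :=
  (1 / (p : ℝ) - 1 / 2) * ((Real.pi - s) / Real.pi) ^ 3
    + (1 / (p : ℝ)) * (s - Real.pi) / Real.pi + 1 / 2

/-- The Kress change of variable `w(s) = 2π v(s)^p / (v(s)^p + v(2π−s)^p)`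
with natural-number exponent. -/
def kressW (p : ℕ) (s : ℝ) : ℝ :=
  2 * Real.pi * (kressV p s) ^ p / ((kressV p s) ^ p + (kressV p (2 * Real.pi - s)) ^ p)

/-- The smooth cofactor with `kressV p s = s * kressU p s`. -/
def kressU (p : ℕ) (s : ℝ) : ℝ :=
  (1 / (p : ℝ) - 1 / 2) * (3 * Real.pi ^ 2 - 3 * Real.pi * s + s ^ 2) * (-1 / Real.pi ^ 3)
    + 1 / ((p : ℝ) * Real.pi)

lemma kressV_eq (p : ℕ) (hp0 : (p:ℝ) ≠ 0) (s : ℝ) : kressV p s = s * kressU p s := by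
  unfold kressV kressU
  field_simp [Real.pi_ne_zero, hp0]
  ring

lemma contDiff_kressU (p : ℕ) : ContDiff ℝ ⊤ (kressU p) := by
  unfold kressU; fun_prop

lemma contDiff_kressV (p : ℕ) : ContDiff ℝ ⊤ (kressV p) := by
  unfold kressV
  exact ((contDiff_const.mul (((contDiff_const.sub contDiff_id).div_const _).pow 3)).add
    ((contDiff_const.mul (contDiff_id.sub contDiff_const)).div_const _)).add contDiff_const

/-- auxiliary: iterated derivative of `(t-a)^p * f t` on an open set. -/
lemma aux_iter (p : ℕ) (a : ℝ) (U : Set ℝ) (hU : IsOpen U) (f : ℝ → ℝ)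
    (hf : ContDiffOn ℝ ⊤ f U) :
    ∀ q, q ≤ p → ∃ g : ℝ → ℝ, ContDiffOn ℝ ⊤ g U ∧
      ∀ s ∈ U, deriv^[q] (fun t => (t - a) ^ p * f t) s = (s - a) ^ (p - q) * g s := by
  intro q
  induction q with
  | zero =>
    intro _
    exact ⟨f, hf, fun s _ => rfl⟩
  | succ q ih =>
    intro hq
    obtain ⟨g, hg, hgeq⟩ := ih (Nat.le_of_succ_le hq)
    refine ⟨fun s => ((p - q : ℕ) : ℝ) * g s + (s - a) * deriv g s, ?_, ?_⟩
    · have hdg : ContDiffOn ℝ ⊤ (deriv g) U := hg.deriv_of_isOpen hU le_top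
      exact (contDiffOn_const.mul hg).add
        (((contDiffOn_id.sub contDiffOn_const)).mul hdg)
    · intro s hs
      have hmem : U ∈ nhds s := hU.mem_nhds hs
      have heq : deriv^[q] (fun t => (t - a) ^ p * f t) =ᶠ[nhds s]
          fun t => (t - a) ^ (p - q) * g t := by
        filter_upwards [hmem] with t ht using hgeq t ht
      have hgd : DifferentiableAt ℝ g s :=
        (hg.contDiffAt hmem).differentiableAt (by simp)
      have h1 : HasDerivAt (fun t : ℝ => (t - a) ^ (p - q))
          ((p - q : ℕ) * (s - a) ^ (p - q - 1) * 1) s :=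
        ((hasDerivAt_id s).sub_const a).pow (p - q)
      have h2 : HasDerivAt (fun t => (t - a) ^ (p - q) * g t)
          (((p - q : ℕ) * (s - a) ^ (p - q - 1) * 1) * g s
            + (s - a) ^ (p - q) * deriv g s) s := h1.mul hgd.hasDerivAt
      rw [Function.iterate_succ_apply', heq.deriv_eq, h2.deriv]
      have hpq : p - q = (p - (q + 1)) + 1 := by omega
      rw [hpq]
      simp only [Nat.add_sub_cancel, pow_succ]
      push_cast
      ring
  
/-- Key lemma: if `w` agrees with `C + (s-a)^p f s` on an open nbhd of `a`,
with `f` smooth, then derivatives of order `1 ≤ q < p` vanish at `a`. -/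
lemma key (p q : ℕ) (hq1 : 1 ≤ q) (hqp : q < p) (a C : ℝ) (U : Set ℝ)
    (hU : IsOpen U) (haU : a ∈ U) (f w : ℝ → ℝ) (hf : ContDiffOn ℝ ⊤ f U)
    (hw : ∀ s ∈ U, w s = C + (s - a) ^ p * f s) :
    iteratedDeriv q w a = 0 := by
  obtain ⟨g, hg, hgeq⟩ := aux_iter p a U hU f hf q hqp.le
  have hev : w =ᶠ[nhds a] fun t => C + (t - a) ^ p * f t := by
    filter_upwards [hU.mem_nhds haU] with t ht using hw t ht
  have hiter : ∀ n, deriv^[n] w =ᶠ[nhds a] deriv^[n] (fun t => C + (t - a) ^ p * f t) := by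
    intro n
    induction n with
    | zero => exact hev
    | succ n ih => rw [Function.iterate_succ_apply', Function.iterate_succ_apply']
                   exact ih.deriv
  rw [iteratedDeriv_eq_iterate, (hiter q).self_of_nhds]
  obtain ⟨q', rfl⟩ : ∃ q', q = q' + 1 := ⟨q - 1, by omega⟩
  have hderiv : deriv (fun t => C + (t - a) ^ p * f t)
      = deriv (fun t => (t - a) ^ p * f t) := by
    funext t
    exact deriv_const_add _
  rw [Function.iterate_succ_apply, hderiv, ← Function.iterate_succ_apply]
  rw [hgeq a haU]
  have : p - (q' + 1) ≠ 0 := by omega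
  simp [zero_pow this]

theorem stmt_15 (p : ℕ) (hp : 2 ≤ p) :
    ∀ q : ℕ, 1 ≤ q → q ≤ p - 1 →
      iteratedDeriv q (kressW p) 0 = 0 ∧
        iteratedDeriv q (kressW p) (2 * Real.pi) = 0 := by
  intro q hq1 hqp
  have hqp' : q < p := by omega
  set D : ℝ → ℝ := fun s => (kressV p s) ^ p + (kressV p (2 * Real.pi - s)) ^ p with hD
  have hDcont : ContDiff ℝ ⊤ D := by
    have h1 := contDiff_kressV p
    have h2 : ContDiff ℝ ⊤ (fun s : ℝ => kressV p (2 * Real.pi - s)) :=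
      h1.comp (contDiff_const.sub contDiff_id)
    exact (h1.pow p).add (h2.pow p)
  set U : Set ℝ := {s | D s ≠ 0} with hUdef
  have hUopen : IsOpen U := isOpen_compl_singleton.preimage hDcont.continuous
  have hpr0 : (p:ℝ) ≠ 0 := by exact_mod_cast (by omega : p ≠ 0)
  have hv0 : kressV p 0 = 0 := by
    unfold kressV; field_simp [Real.pi_ne_zero, hpr0]; ring
  have hv2pi : kressV p (2 * Real.pi) = 1 := by
    unfold kressV
    rw [show Real.pi - 2 * Real.pi = -Real.pi by ring]
    field_simp [Real.pi_ne_zero, hpr0]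
    ring
  have hp0 : p ≠ 0 := by omega
  have h0U : (0 : ℝ) ∈ U := by
    simp only [hUdef, Set.mem_setOf_eq, hD]
    rw [sub_zero, hv0, hv2pi, zero_pow hp0, one_pow]
    norm_num
  have h2U : (2 * Real.pi : ℝ) ∈ U := by
    simp only [hUdef, Set.mem_setOf_eq, hD]
    rw [show 2 * Real.pi - 2 * Real.pi = 0 by ring, hv0, hv2pi, zero_pow hp0, one_pow]
    norm_num
  constructor
  · -- at 0
    apply key p q hq1 hqp' 0 0 U hUopen h0U
      (fun s => 2 * Real.pi * (kressU p s) ^ p / D s)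
    · exact ((contDiff_const.mul ((contDiff_kressU p).pow p)).contDiffOn).div
        hDcont.contDiffOn (fun s hs => hs)
    · intro s hs
      have hDs : D s ≠ 0 := hs
      unfold kressW
      rw [show ((kressV p s) ^ p + (kressV p (2 * Real.pi - s)) ^ p) = D s from rfl]
      rw [kressV_eq p hpr0 s, sub_zero, mul_pow]
      field_simp
      ring
  · -- at 2π
    apply key p q hq1 hqp' (2 * Real.pi) (2 * Real.pi) U hUopen h2U
      (fun s => (-1 : ℝ) ^ p * (-(2 * Real.pi)) * (kressU p (2 * Real.pi - s)) ^ p / D s)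
    · have hu2 : ContDiff ℝ ⊤ (fun s : ℝ => kressU p (2 * Real.pi - s)) :=
        (contDiff_kressU p).comp (contDiff_const.sub contDiff_id)
      exact ((contDiff_const.mul (hu2.pow p)).contDiffOn).div
        hDcont.contDiffOn (fun s hs => hs)
    · intro s hs
      have hDs : D s ≠ 0 := hs
      unfold kressW
      rw [show ((kressV p s) ^ p + (kressV p (2 * Real.pi - s)) ^ p) = D s from rfl]
      have hDexp : D s = (kressV p s) ^ p
          + (-1 : ℝ) ^ p * (s - 2 * Real.pi) ^ p * (kressU p (2 * Real.pi - s)) ^ p := by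
        show kressV p s ^ p + kressV p (2 * Real.pi - s) ^ p = _
        rw [kressV_eq p hpr0 (2 * Real.pi - s), mul_pow,
          show (2 * Real.pi - s) = (-1) * (s - 2 * Real.pi) by ring, mul_pow]
        try ring
      rw [div_eq_iff hDs]
      field_simp [hDs]
      rw [hDexp]
      ring
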